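/- Let 0 < delta < 1 and let M be a delta-net (in trace norm) for the pure states on C^d. Define A as the supremum over all pairs of pure states and B as the supremum over pairs of elements of M of |(1/N) sum_i tr(U_i phi U_i^† psi) - 1/d|, for fixed unitaries U_1,...,U_N. Then A ≤ B + 2 delta (A + 1/d), and consequently if delta < 1/2 then A ≤ (1/(1-2 delta)) (B + 2 delta / d). -/

import Mathlib

open Matrix MeasureTheory
open scoped ComplexOrder

/-- Trace (nuclear) norm of a complex matrix: `tr √(Aᴴ A)`. -/
noncomputable def traceNorm {d : ℕ} (A : Matrix (Fin d) (Fin d) ℂ) : ℝ :=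
  (((Matrix.posSemidef_conjTranspose_mul_self A).1.eigenvectorUnitary.1 *
    diagonal (((↑) : ℝ → ℂ) ∘ (√·) ∘ (Matrix.posSemidef_conjTranspose_mul_self A).1.eigenvalues) *
    (star (Matrix.posSemidef_conjTranspose_mul_self A).1.eigenvectorUnitary :
      Matrix (Fin d) (Fin d) ℂ)).trace).re

/-- Operator (spectral) norm of a complex matrix. -/
noncomputable def opNorm {d : ℕ} (A : Matrix (Fin d) (Fin d) ℂ) : ℝ :=
  ‖Matrix.toEuclideanCLM (𝕜 := ℂ) A‖

/-- A mixed state: positive semidefinite with trace 1. -/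
def IsMixedState {d : ℕ} (A : Matrix (Fin d) (Fin d) ℂ) : Prop :=
  A.PosSemidef ∧ A.trace = 1

/-- A pure state: rank-one orthogonal projection `|x⟩⟨x|` for a unit vector `x`. -/
def IsPureState {d : ℕ} (A : Matrix (Fin d) (Fin d) ℂ) : Prop :=
  ∃ x : EuclideanSpace ℂ (Fin d), ‖x‖ = 1 ∧ A = Matrix.vecMulVec x (star x)

/-- The empirical quantity `(1/N) ∑ᵢ tr(Uᵢ φ Uᵢᴴ ψ) - 1/d`. -/
noncomputable def Fq {d N : ℕ} (U : Fin N → Matrix.unitaryGroup (Fin d) ℂ)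
    (φ ψ : Matrix (Fin d) (Fin d) ℂ) : ℝ :=
  (1 / (N : ℝ)) * ∑ i, (((U i : Matrix (Fin d) (Fin d) ℂ) * φ *
    (U i : Matrix (Fin d) (Fin d) ℂ)ᴴ * ψ).trace).re - 1 / (d : ℝ)

/-! ### Auxiliary lemmas -/

namespace StmtAux

variable {d N : ℕ}

noncomputable def Gq (U : Fin N → Matrix.unitaryGroup (Fin d) ℂ)
    (φ ψ : Matrix (Fin d) (Fin d) ℂ) : ℝ :=
  (1 / (N : ℝ)) * ∑ i, (((U i : Matrix (Fin d) (Fin d) ℂ) * φ *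
    (U i : Matrix (Fin d) (Fin d) ℂ)ᴴ * ψ).trace).re

lemma Fq_eq (U : Fin N → Matrix.unitaryGroup (Fin d) ℂ) (φ ψ : Matrix (Fin d) (Fin d) ℂ) :
    Fq U φ ψ = Gq U φ ψ - 1 / (d : ℝ) := rfl

lemma star_mul_self_re (z : ℂ) : (star z * z).re = ‖z‖ ^ 2 := by
  rw [Complex.star_def, mul_comm, Complex.mul_conj]
  simp [Complex.normSq_eq_norm_sq, sq]

lemma dot_self_re (u : Fin d → ℂ) : (dotProduct (star u) u).re = ∑ i, ‖u i‖ ^ 2 := by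
  rw [dotProduct, Complex.re_sum]
  exact Finset.sum_congr rfl fun i _ => star_mul_self_re (u i)

lemma euclidean_norm_sq (x : EuclideanSpace ℂ (Fin d)) :
    ‖x‖ ^ 2 = ∑ i, ‖x i‖ ^ 2 := by
  rw [EuclideanSpace.norm_eq, Real.sq_sqrt]
  positivity

lemma dot_self_unit (x : EuclideanSpace ℂ (Fin d)) (hx : ‖x‖ = 1) :
    dotProduct (star ⇑x) ⇑x = 1 := by
  apply Complex.ext
  · rw [dot_self_re, Complex.one_re]
    have := euclidean_norm_sq x
    rw [hx] at this
    show ∑ i, ‖x i‖ ^ 2 = 1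
    rw [← this]
    norm_num
  · simp only [dotProduct, Complex.im_sum, Complex.one_im]
    refine Finset.sum_eq_zero fun i _ => ?_
    have him : ∀ z : ℂ, (star z * z).im = 0 := fun z => by
      rw [Complex.star_def, mul_comm, Complex.mul_conj]; simp
    exact him (x i)

lemma vecMulVec_mul_vecMulVec (x y z w : Fin d → ℂ) :
    Matrix.vecMulVec x y * Matrix.vecMulVec z w
      = dotProduct y z • Matrix.vecMulVec x w := by
  ext i j
  simp [Matrix.mul_apply, Matrix.vecMulVec_apply, dotProduct, Finset.sum_mul,
    Finset.mul_sum, mul_comm, mul_left_comm]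

lemma hermitian_vecMulVec (x : Fin d → ℂ) : (Matrix.vecMulVec x (star x)).IsHermitian := by
  ext i j
  simp [Matrix.conjTranspose_apply, Matrix.vecMulVec_apply, mul_comm]

lemma isHermitian_pure {φ : Matrix (Fin d) (Fin d) ℂ} (hφ : IsPureState φ) : φ.IsHermitian := by
  obtain ⟨x, -, rfl⟩ := hφ
  exact hermitian_vecMulVec ⇑x

open scoped MatrixOrder in
lemma traceNorm_eq_of_sq {A S : Matrix (Fin d) (Fin d) ℂ} (hS : S.PosSemidef)
    (h : S ^ 2 = Aᴴ * A) : traceNorm A = (S.trace).re := by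
  have h1 : CFC.sqrt (Aᴴ * A) = S := CFC.sqrt_unique (by rw [← h, sq]) hS.nonneg
  have h2 : CFC.sqrt (Aᴴ * A) = (posSemidef_conjTranspose_mul_self A).1.cfc Real.sqrt := by
    rw [CFC.sqrt_eq_cfc, cfc_nnreal_eq_real _ _ (posSemidef_conjTranspose_mul_self A).nonneg,
      (posSemidef_conjTranspose_mul_self A).1.cfc_eq]
    unfold IsHermitian.cfc
    congr 3
    ext j
    simp [Real.coe_sqrt, Real.coe_toNNReal', (posSemidef_conjTranspose_mul_self A).eigenvalues_nonneg]
  rw [← h1, h2, traceNorm, IsHermitian.cfc, Unitary.conjStarAlgAut_apply]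
  rfl

lemma traceNorm_pure {φ : Matrix (Fin d) (Fin d) ℂ} (hφ : IsPureState φ) : traceNorm φ = 1 := by
  obtain ⟨x, hx, rfl⟩ := hφ
  set P : Matrix (Fin d) (Fin d) ℂ := Matrix.vecMulVec (⇑x) (star ⇑x) with hP
  have hPP : P * P = P := by
    rw [hP, vecMulVec_mul_vecMulVec, dot_self_unit x hx, one_smul]
  have hPH : Pᴴ = P := hermitian_vecMulVec ⇑x
  have hPHP : Pᴴ * P = P := by rw [hPH, hPP]
  have hPSD : P.PosSemidef := by
    rw [← hPHP]; exact Matrix.posSemidef_conjTranspose_mul_self P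
  rw [traceNorm_eq_of_sq hPSD (by rw [pow_two, hPP, hPHP])]
  have htr : P.trace = 1 := by
    rw [hP, Matrix.trace]
    have : ∑ i, (Matrix.vecMulVec (⇑x) (star ⇑x)).diag i = dotProduct (star ⇑x) ⇑x := by
      simp [Matrix.diag, Matrix.vecMulVec_apply, dotProduct, mul_comm]
    rw [this, dot_self_unit x hx]
  rw [htr]
  simp

lemma conj_vecMulVec (V : Matrix (Fin d) (Fin d) ℂ) (x : Fin d → ℂ) :
    V * Matrix.vecMulVec x (star x) * Vᴴ = Matrix.vecMulVec (V *ᵥ x) (star (V *ᵥ x)) := by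
  ext i j
  simp [Matrix.mul_apply, Matrix.vecMulVec_apply, Matrix.mulVec, Matrix.conjTranspose_apply,
    dotProduct, Finset.mul_sum, Finset.sum_mul, mul_comm, mul_left_comm, mul_assoc]

lemma unitary_dot (V : Matrix.unitaryGroup (Fin d) ℂ) (x : Fin d → ℂ) :
    dotProduct (star ((V : Matrix (Fin d) (Fin d) ℂ) *ᵥ x))
      ((V : Matrix (Fin d) (Fin d) ℂ) *ᵥ x) = dotProduct (star x) x := by
  rw [Matrix.star_mulVec, Matrix.dotProduct_mulVec, Matrix.vecMul_vecMul]
  have h := Matrix.UnitaryGroup.star_mul_self V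
  rw [← Matrix.star_eq_conjTranspose] at *
  rw [h, Matrix.vecMul_one]

lemma isPureState_conj (V : Matrix.unitaryGroup (Fin d) ℂ) {φ : Matrix (Fin d) (Fin d) ℂ}
    (hφ : IsPureState φ) :
    IsPureState ((V : Matrix (Fin d) (Fin d) ℂ) * φ * (V : Matrix (Fin d) (Fin d) ℂ)ᴴ) := by
  obtain ⟨x, hx, rfl⟩ := hφ
  set w : Fin d → ℂ := (V : Matrix (Fin d) (Fin d) ℂ) *ᵥ ⇑x with hw
  set x' : EuclideanSpace ℂ (Fin d) := (WithLp.equiv 2 (Fin d → ℂ)).symm w with hx'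
  have hsum : ∑ i, ‖w i‖ ^ 2 = ∑ i, ‖x i‖ ^ 2 := by
    have h1 := congrArg Complex.re (unitary_dot V ⇑x)
    rwa [dot_self_re, dot_self_re] at h1
  have h4 : ‖x'‖ ^ 2 = 1 := by
    rw [euclidean_norm_sq]
    have h5 : ∑ i, ‖x' i‖ ^ 2 = ∑ i, ‖w i‖ ^ 2 := rfl
    rw [h5, hsum, ← euclidean_norm_sq, hx]
    norm_num
  have h5 : ‖x'‖ = 1 := by nlinarith [norm_nonneg x']
  refine ⟨x', h5, ?_⟩
  exact (conj_vecMulVec (V : Matrix (Fin d) (Fin d) ℂ) ⇑x).trans (by rfl)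

lemma trace_vecMulVec_mul (x y : Fin d → ℂ) (B : Matrix (Fin d) (Fin d) ℂ) :
    (Matrix.vecMulVec x y * B).trace = dotProduct y (B *ᵥ x) := by
  simp [Matrix.trace, Matrix.mul_apply, Matrix.vecMulVec_apply, Matrix.diag, dotProduct,
    Matrix.mulVec, Finset.mul_sum, mul_comm, mul_left_comm]
  rw [Finset.sum_comm]

lemma trace_pure_pure (x y : Fin d → ℂ) :
    (Matrix.vecMulVec x (star x) * Matrix.vecMulVec y (star y)).trace
      = dotProduct (star x) y * dotProduct (star y) x := by
  rw [trace_vecMulVec_mul]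
  simp [Matrix.mulVec, Matrix.vecMulVec_apply, dotProduct, Finset.mul_sum, Finset.sum_mul,
    mul_comm, mul_left_comm]

lemma star_dot_conj (x y : Fin d → ℂ) :
    dotProduct (star y) x = star (dotProduct (star x) y) := by
  simp [dotProduct, mul_comm]

lemma trace_pure_pure_mem (x y : EuclideanSpace ℂ (Fin d)) (hx : ‖x‖ = 1) (hy : ‖y‖ = 1) :
    0 ≤ ((Matrix.vecMulVec (⇑x) (star ⇑x) * Matrix.vecMulVec (⇑y) (star ⇑y)).trace).re ∧
    ((Matrix.vecMulVec (⇑x) (star ⇑x) * Matrix.vecMulVec (⇑y) (star ⇑y)).trace).re ≤ 1 := by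
  rw [trace_pure_pure, star_dot_conj, dotProduct_comm (star y.ofLp) x.ofLp, ← EuclideanSpace.inner_eq_star_dotProduct,
    star_mul_self_re]
  constructor
  · positivity
  · have := norm_inner_le_norm (𝕜 := ℂ) y x
    rw [hx, hy] at this
    nlinarith [norm_nonneg (inner ℂ y x)]

lemma trace_pure_pure_mem' {φ ψ : Matrix (Fin d) (Fin d) ℂ} (hφ : IsPureState φ)
    (hψ : IsPureState ψ) : 0 ≤ ((φ * ψ).trace).re ∧ ((φ * ψ).trace).re ≤ 1 := by
  obtain ⟨x, hx, rfl⟩ := hφ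
  obtain ⟨y, hy, rfl⟩ := hψ
  exact trace_pure_pure_mem x y hx hy

/-- `Gq` between pure states lies in `[0,1]`. -/
lemma Gq_pure_bounds (U : Fin N → Matrix.unitaryGroup (Fin d) ℂ)
    {φ ψ : Matrix (Fin d) (Fin d) ℂ} (hφ : IsPureState φ) (hψ : IsPureState ψ) :
    0 ≤ Gq U φ ψ ∧ Gq U φ ψ ≤ 1 := by
  have hterm : ∀ i, 0 ≤ (((U i : Matrix (Fin d) (Fin d) ℂ) * φ *
      (U i : Matrix (Fin d) (Fin d) ℂ)ᴴ * ψ).trace).re ∧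
      (((U i : Matrix (Fin d) (Fin d) ℂ) * φ *
      (U i : Matrix (Fin d) (Fin d) ℂ)ᴴ * ψ).trace).re ≤ 1 := by
    intro i
    have h1 : IsPureState ((U i : Matrix (Fin d) (Fin d) ℂ) * φ *
        (U i : Matrix (Fin d) (Fin d) ℂ)ᴴ) := isPureState_conj (U i) hφ
    exact trace_pure_pure_mem' h1 hψ
  constructor
  · apply mul_nonneg
    · positivity
    · exact Finset.sum_nonneg fun i _ => (hterm i).1
  · rcases Nat.eq_zero_or_pos N with hN | hN
    · subst hN
      simp [Gq]
    · have hsum : ∑ i, (((U i : Matrix (Fin d) (Fin d) ℂ) * φ *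
          (U i : Matrix (Fin d) (Fin d) ℂ)ᴴ * ψ).trace).re ≤ (N : ℝ) := by
        calc ∑ i, (((U i : Matrix (Fin d) (Fin d) ℂ) * φ *
            (U i : Matrix (Fin d) (Fin d) ℂ)ᴴ * ψ).trace).re ≤ ∑ _i : Fin N, (1 : ℝ) :=
            Finset.sum_le_sum fun i _ => (hterm i).2
          _ = (N : ℝ) := by simp
      have hNpos : (0 : ℝ) < N := by exact_mod_cast hN
      rw [Gq]
      calc (1 / (N : ℝ)) * ∑ i, (((U i : Matrix (Fin d) (Fin d) ℂ) * φ *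
          (U i : Matrix (Fin d) (Fin d) ℂ)ᴴ * ψ).trace).re
          ≤ (1 / (N : ℝ)) * (N : ℝ) := by
            apply mul_le_mul_of_nonneg_left hsum
            positivity
        _ = 1 := by field_simp

/-! #### Linearity of `Gq` -/

lemma Gq_add_left (U : Fin N → Matrix.unitaryGroup (Fin d) ℂ)
    (a a' b : Matrix (Fin d) (Fin d) ℂ) :
    Gq U (a + a') b = Gq U a b + Gq U a' b := by
  simp only [Gq, mul_add, add_mul, Matrix.trace_add, Complex.add_re, Finset.sum_add_distrib]

lemma Gq_smul_left (U : Fin N → Matrix.unitaryGroup (Fin d) ℂ) (c : ℝ)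
    (a b : Matrix (Fin d) (Fin d) ℂ) :
    Gq U ((c : ℂ) • a) b = c * Gq U a b := by
  simp only [Gq, Matrix.mul_smul, Matrix.smul_mul, Matrix.trace_smul]
  have : ∀ z : ℂ, ((c : ℂ) • z).re = c * z.re := fun z => by
    simp [smul_eq_mul, Complex.mul_re]
  simp only [this, Finset.mul_sum]
  exact Finset.sum_congr rfl fun i _ => by ring

lemma Gq_sum_left (U : Fin N → Matrix.unitaryGroup (Fin d) ℂ) {ι : Type*} (s : Finset ι)
    (f : ι → Matrix (Fin d) (Fin d) ℂ) (b : Matrix (Fin d) (Fin d) ℂ) :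
    Gq U (∑ j ∈ s, f j) b = ∑ j ∈ s, Gq U (f j) b := by
  classical
  induction s using Finset.induction_on with
  | empty => simp [Gq]
  | insert j s hj ih =>
      rw [Finset.sum_insert hj, Finset.sum_insert hj, Gq_add_left, ih]

lemma Gq_add_right (U : Fin N → Matrix.unitaryGroup (Fin d) ℂ)
    (a b b' : Matrix (Fin d) (Fin d) ℂ) :
    Gq U a (b + b') = Gq U a b + Gq U a b' := by
  simp only [Gq, mul_add, Matrix.trace_add, Complex.add_re, Finset.sum_add_distrib]

lemma Gq_smul_right (U : Fin N → Matrix.unitaryGroup (Fin d) ℂ) (c : ℝ)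
    (a b : Matrix (Fin d) (Fin d) ℂ) :
    Gq U a ((c : ℂ) • b) = c * Gq U a b := by
  simp only [Gq, Matrix.mul_smul, Matrix.trace_smul]
  have : ∀ z : ℂ, ((c : ℂ) • z).re = c * z.re := fun z => by
    simp [smul_eq_mul, Complex.mul_re]
  simp only [this, Finset.mul_sum]
  exact Finset.sum_congr rfl fun i _ => by ring

lemma Gq_sum_right (U : Fin N → Matrix.unitaryGroup (Fin d) ℂ) {ι : Type*} (s : Finset ι)
    (a : Matrix (Fin d) (Fin d) ℂ) (f : ι → Matrix (Fin d) (Fin d) ℂ) :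
    Gq U a (∑ j ∈ s, f j) = ∑ j ∈ s, Gq U a (f j) := by
  classical
  induction s using Finset.induction_on with
  | empty => simp [Gq]
  | insert j s hj ih =>
      rw [Finset.sum_insert hj, Finset.sum_insert hj, Gq_add_right, ih]

lemma Gq_sub_left (U : Fin N → Matrix.unitaryGroup (Fin d) ℂ)
    (a a' b : Matrix (Fin d) (Fin d) ℂ) :
    Gq U (a - a') b = Gq U a b - Gq U a' b := by
  have := Gq_add_left U (a - a') a' b
  rw [sub_add_cancel] at this
  linarith

lemma Gq_sub_right (U : Fin N → Matrix.unitaryGroup (Fin d) ℂ)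
    (a b b' : Matrix (Fin d) (Fin d) ℂ) :
    Gq U a (b - b') = Gq U a b - Gq U a b' := by
  have := Gq_add_right U a (b - b') b'
  rw [sub_add_cancel] at this
  linarith

/-! #### Spectral decomposition -/

lemma spectral_sum {a : Matrix (Fin d) (Fin d) ℂ} (ha : a.IsHermitian) :
    a = ∑ j, (ha.eigenvalues j : ℂ) •
      Matrix.vecMulVec (⇑(ha.eigenvectorBasis j)) (star ⇑(ha.eigenvectorBasis j)) := by
  conv_lhs => rw [ha.spectral_theorem, Unitary.conjStarAlgAut_apply]
  ext i k
  simp only [Matrix.mul_apply, Matrix.diagonal_apply, Matrix.sum_apply, Matrix.smul_apply,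
    Matrix.vecMulVec_apply, Matrix.conjTranspose_apply, Matrix.IsHermitian.eigenvectorUnitary_apply,
    Function.comp_apply, smul_eq_mul, mul_ite, mul_zero, Finset.sum_ite_eq', Finset.mem_univ,
    if_true, Pi.star_apply, RCLike.star_def, Matrix.star_apply]
  refine Finset.sum_congr rfl fun j _ => ?_
  rw [mul_right_comm, mul_comm]
  rfl

lemma traceNorm_hermitian {a : Matrix (Fin d) (Fin d) ℂ} (ha : a.IsHermitian) :
    traceNorm a = ∑ j, |ha.eigenvalues j| := by
  set V : Matrix (Fin d) (Fin d) ℂ := (ha.eigenvectorUnitary : Matrix (Fin d) (Fin d) ℂ) with hV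
  set D : Matrix (Fin d) (Fin d) ℂ :=
    Matrix.diagonal (fun j => Complex.ofReal |ha.eigenvalues j|) with hD
  have hVV : Vᴴ * V = 1 := by
    have h := Matrix.UnitaryGroup.star_mul_self ha.eigenvectorUnitary
    rwa [Matrix.star_eq_conjTranspose] at h
  have hS : (V * D * Vᴴ).PosSemidef := by
    refine Matrix.PosSemidef.mul_mul_conjTranspose_same ?_ V
    refine Matrix.posSemidef_diagonal_iff.mpr fun j => ?_
    exact_mod_cast Complex.zero_le_real.mpr (abs_nonneg _)
  have hsq : (V * D * Vᴴ) ^ 2 = aᴴ * a := by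
    have hDD : D * D
        = Matrix.diagonal (fun j => (ha.eigenvalues j : ℂ) * (ha.eigenvalues j : ℂ)) := by
      rw [hD, Matrix.diagonal_mul_diagonal]
      have habs : ∀ j, (Complex.ofReal |ha.eigenvalues j|) * (Complex.ofReal |ha.eigenvalues j|)
          = (ha.eigenvalues j : ℂ) * (ha.eigenvalues j : ℂ) := fun j => by
        rw [← Complex.ofReal_mul, abs_mul_abs_self, Complex.ofReal_mul]
      simp only [habs]
    have hsp := ha.spectral_theorem
    rw [Unitary.conjStarAlgAut_apply] at hsp
    rw [ha.eq]
    calc (V * D * Vᴴ) ^ 2 = V * (D * (Vᴴ * V) * D) * Vᴴ := by rw [pow_two]; noncomm_ring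
    _ = V * (D * D) * Vᴴ := by rw [hVV]; noncomm_ring
    _ = a * a := by
        conv_rhs => rw [hsp]
        rw [hDD]
        have h2 : Matrix.diagonal (RCLike.ofReal ∘ ha.eigenvalues) * (Vᴴ * V) *
            Matrix.diagonal (RCLike.ofReal ∘ ha.eigenvalues)
            = Matrix.diagonal (fun j => (ha.eigenvalues j : ℂ) * (ha.eigenvalues j : ℂ)) := by
          rw [hVV, mul_one, Matrix.diagonal_mul_diagonal]
          rfl
        calc V * Matrix.diagonal (fun j => (ha.eigenvalues j : ℂ) * (ha.eigenvalues j : ℂ)) * Vᴴ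
            = V * (Matrix.diagonal (RCLike.ofReal ∘ ha.eigenvalues) * (Vᴴ * V) *
              Matrix.diagonal (RCLike.ofReal ∘ ha.eigenvalues)) * Vᴴ := by rw [h2]
          _ = (V * Matrix.diagonal (RCLike.ofReal ∘ ha.eigenvalues) * Vᴴ) *
              (V * Matrix.diagonal (RCLike.ofReal ∘ ha.eigenvalues) * Vᴴ) := by noncomm_ring
  rw [traceNorm_eq_of_sq hS hsq, Matrix.trace_mul_cycle, hVV, one_mul]
  rw [hD, Matrix.trace_diagonal, Complex.re_sum]
  simp

lemma traceNorm_nonneg_hermitian {a : Matrix (Fin d) (Fin d) ℂ} (ha : a.IsHermitian) :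
    0 ≤ traceNorm a := by
  rw [traceNorm_hermitian ha]
  exact Finset.sum_nonneg fun j _ => abs_nonneg _

/-- The key bilinear estimate. -/
lemma key_bound (U : Fin N → Matrix.unitaryGroup (Fin d) ℂ) (C : ℝ) (hC : 0 ≤ C)
    (hP : ∀ P Q : Matrix (Fin d) (Fin d) ℂ, IsPureState P → IsPureState Q → |Gq U P Q| ≤ C)
    {a b : Matrix (Fin d) (Fin d) ℂ} (ha : a.IsHermitian) (hb : b.IsHermitian) :
    |Gq U a b| ≤ traceNorm a * traceNorm b * C := by
  have hPj : ∀ j, IsPureState (Matrix.vecMulVec (⇑(ha.eigenvectorBasis j))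
      (star ⇑(ha.eigenvectorBasis j))) := fun j =>
    ⟨ha.eigenvectorBasis j, ha.eigenvectorBasis.orthonormal.1 j, rfl⟩
  have hQk : ∀ k, IsPureState (Matrix.vecMulVec (⇑(hb.eigenvectorBasis k))
      (star ⇑(hb.eigenvectorBasis k))) := fun k =>
    ⟨hb.eigenvectorBasis k, hb.eigenvectorBasis.orthonormal.1 k, rfl⟩
  set P : Fin d → Matrix (Fin d) (Fin d) ℂ := fun j =>
    Matrix.vecMulVec (⇑(ha.eigenvectorBasis j)) (star ⇑(ha.eigenvectorBasis j)) with hPdef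
  set Q : Fin d → Matrix (Fin d) (Fin d) ℂ := fun k =>
    Matrix.vecMulVec (⇑(hb.eigenvectorBasis k)) (star ⇑(hb.eigenvectorBasis k)) with hQdef
  have hexp : Gq U a b = ∑ j, (ha.eigenvalues j) * ∑ k, (hb.eigenvalues k) *
      Gq U (P j) (Q k) := by
    conv_lhs => rw [spectral_sum ha, spectral_sum hb]
    rw [Gq_sum_left]
    refine Finset.sum_congr rfl fun j _ => ?_
    rw [Gq_smul_left, Gq_sum_right]
    congr 1
    refine Finset.sum_congr rfl fun k _ => ?_
    rw [Gq_smul_right]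
  rw [hexp, traceNorm_hermitian ha, traceNorm_hermitian hb]
  calc |∑ j, (ha.eigenvalues j) * ∑ k, (hb.eigenvalues k) * Gq U (P j) (Q k)|
      ≤ ∑ j, |(ha.eigenvalues j) * ∑ k, (hb.eigenvalues k) * Gq U (P j) (Q k)| :=
        Finset.abs_sum_le_sum_abs _ _
    _ ≤ ∑ j, |ha.eigenvalues j| * ((∑ k, |hb.eigenvalues k|) * C) := by
        refine Finset.sum_le_sum fun j _ => ?_
        rw [abs_mul]
        refine mul_le_mul_of_nonneg_left ?_ (abs_nonneg _)
        calc |∑ k, (hb.eigenvalues k) * Gq U (P j) (Q k)|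
            ≤ ∑ k, |(hb.eigenvalues k) * Gq U (P j) (Q k)| := Finset.abs_sum_le_sum_abs _ _
          _ ≤ ∑ k, |hb.eigenvalues k| * C := by
              refine Finset.sum_le_sum fun k _ => ?_
              rw [abs_mul]
              exact mul_le_mul_of_nonneg_left (hP _ _ (hPj j) (hQk k)) (abs_nonneg _)
          _ = (∑ k, |hb.eigenvalues k|) * C := by rw [Finset.sum_mul]
    _ = (∑ j, |ha.eigenvalues j|) * ((∑ k, |hb.eigenvalues k|) * C) := by
        rw [← Finset.sum_mul]
    _ = (∑ j, |ha.eigenvalues j|) * (∑ k, |hb.eigenvalues k|) * C := by ring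

end StmtAux

open StmtAux in
theorem stmt2 (d N : ℕ) (hd : 0 < d) (U : Fin N → Matrix.unitaryGroup (Fin d) ℂ)
    (δ : ℝ) (hδ0 : 0 < δ) (hδ1 : δ < 1)
    (M : Finset (Matrix (Fin d) (Fin d) ℂ))
    (hMpure : ∀ φ₀ ∈ M, IsPureState φ₀)
    (hnet : ∀ φ : Matrix (Fin d) (Fin d) ℂ, IsPureState φ →
      ∃ φ₀ ∈ M, traceNorm (φ - φ₀) ≤ δ)
    (A B : ℝ)
    (hA : A = sSup {t : ℝ | ∃ φ ψ : Matrix (Fin d) (Fin d) ℂ,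
      IsPureState φ ∧ IsPureState ψ ∧ t = |Fq U φ ψ|})
    (hB : B = sSup {t : ℝ | ∃ φ₀ ∈ M, ∃ ψ₀ ∈ M, t = |Fq U φ₀ ψ₀|}) :
    A ≤ B + 2 * δ * (A + 1 / (d : ℝ)) ∧
      (δ < 1 / 2 → A ≤ (1 / (1 - 2 * δ)) * (B + 2 * δ / (d : ℝ))) := by
  set SA : Set ℝ := {t : ℝ | ∃ φ ψ : Matrix (Fin d) (Fin d) ℂ,
      IsPureState φ ∧ IsPureState ψ ∧ t = |Fq U φ ψ|} with hSA
  set SB : Set ℝ := {t : ℝ | ∃ φ₀ ∈ M, ∃ ψ₀ ∈ M, t = |Fq U φ₀ ψ₀|} with hSB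
  have hdR : (0 : ℝ) < d := by exact_mod_cast hd
  -- uniform bound on |Fq| between pure states
  have hFq_bound : ∀ φ ψ : Matrix (Fin d) (Fin d) ℂ, IsPureState φ → IsPureState ψ →
      |Fq U φ ψ| ≤ 2 := by
    intro φ ψ hφ hψ
    obtain ⟨h0, h1⟩ := Gq_pure_bounds U hφ hψ
    have hd1 : 0 < 1 / (d : ℝ) := by positivity
    have hd2 : 1 / (d : ℝ) ≤ 1 := by
      rw [div_le_one hdR]; exact_mod_cast hd
    rw [Fq_eq, abs_le]
    constructor <;> nlinarith
  have hbddA : BddAbove SA := by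
    refine ⟨2, fun t ht => ?_⟩
    obtain ⟨φ, ψ, hφ, hψ, rfl⟩ := ht
    exact hFq_bound φ ψ hφ hψ
  have hSBsub : SB ⊆ SA := by
    intro t ht
    obtain ⟨φ₀, hφ₀, ψ₀, hψ₀, rfl⟩ := ht
    exact ⟨φ₀, ψ₀, hMpure φ₀ hφ₀, hMpure ψ₀ hψ₀, rfl⟩
  have hbddB : BddAbove SB := hbddA.mono hSBsub
  -- a canonical pure state
  have hstd : ∃ φ : Matrix (Fin d) (Fin d) ℂ, IsPureState φ := by
    refine ⟨_, ⟨EuclideanSpace.single ⟨0, hd⟩ 1, ?_, rfl⟩⟩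
    simp [EuclideanSpace.norm_single]
  obtain ⟨φstd, hφstd⟩ := hstd
  have hA0 : 0 ≤ A := by
    rw [hA]
    exact le_trans (abs_nonneg _) (le_csSup hbddA ⟨φstd, φstd, hφstd, hφstd, rfl⟩)
  have hC0 : 0 ≤ A + 1 / (d : ℝ) := by positivity
  -- |Gq P Q| ≤ A + 1/d for pure states
  have hGq_le : ∀ P Q : Matrix (Fin d) (Fin d) ℂ, IsPureState P → IsPureState Q →
      |Gq U P Q| ≤ A + 1 / (d : ℝ) := by
    intro P Q hP hQ
    have h1 : |Fq U P Q| ≤ A := by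
      rw [hA]; exact le_csSup hbddA ⟨P, Q, hP, hQ, rfl⟩
    have h2 : Gq U P Q = Fq U P Q + 1 / (d : ℝ) := by rw [Fq_eq]; ring
    rw [h2]
    calc |Fq U P Q + 1 / (d : ℝ)| ≤ |Fq U P Q| + |1 / (d : ℝ)| := abs_add_le _ _
      _ ≤ A + 1 / (d : ℝ) := by
          have h3 : |1 / (d : ℝ)| = 1 / (d : ℝ) := abs_of_pos (by positivity)
          linarith
  -- main bound for each element of SA
  have hmain : ∀ t ∈ SA, t ≤ B + 2 * δ * (A + 1 / (d : ℝ)) := by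
    intro t ht
    obtain ⟨φ, ψ, hφ, hψ, rfl⟩ := ht
    obtain ⟨φ₀, hφ₀M, hφ₀d⟩ := hnet φ hφ
    obtain ⟨ψ₀, hψ₀M, hψ₀d⟩ := hnet ψ hψ
    have hφ₀p := hMpure φ₀ hφ₀M
    have hψ₀p := hMpure ψ₀ hψ₀M
    have hdecomp : Fq U φ ψ = Fq U φ₀ ψ₀ + Gq U (φ - φ₀) ψ + Gq U φ₀ (ψ - ψ₀) := by
      rw [Fq_eq, Fq_eq, Gq_sub_left, Gq_sub_right]; ring
    have hkey1 : |Gq U (φ - φ₀) ψ| ≤ δ * (A + 1 / (d : ℝ)) := by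
      have h := key_bound U (A + 1 / (d : ℝ)) hC0 hGq_le
        ((isHermitian_pure hφ).sub (isHermitian_pure hφ₀p)) (isHermitian_pure hψ)
      rw [traceNorm_pure hψ, mul_one] at h
      calc |Gq U (φ - φ₀) ψ| ≤ traceNorm (φ - φ₀) * (A + 1 / (d : ℝ)) := h
        _ ≤ δ * (A + 1 / (d : ℝ)) := mul_le_mul_of_nonneg_right hφ₀d hC0
    have hkey2 : |Gq U φ₀ (ψ - ψ₀)| ≤ δ * (A + 1 / (d : ℝ)) := by
      have h := key_bound U (A + 1 / (d : ℝ)) hC0 hGq_le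
        (isHermitian_pure hφ₀p) ((isHermitian_pure hψ).sub (isHermitian_pure hψ₀p))
      rw [traceNorm_pure hφ₀p, one_mul] at h
      calc |Gq U φ₀ (ψ - ψ₀)| ≤ traceNorm (ψ - ψ₀) * (A + 1 / (d : ℝ)) := h
        _ ≤ δ * (A + 1 / (d : ℝ)) := mul_le_mul_of_nonneg_right hψ₀d hC0
    have hBle : |Fq U φ₀ ψ₀| ≤ B := by
      rw [hB]; exact le_csSup hbddB ⟨φ₀, hφ₀M, ψ₀, hψ₀M, rfl⟩
    have habs : |Fq U φ ψ| ≤ |Fq U φ₀ ψ₀| + |Gq U (φ - φ₀) ψ| + |Gq U φ₀ (ψ - ψ₀)| := by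
      rw [hdecomp]
      calc |Fq U φ₀ ψ₀ + Gq U (φ - φ₀) ψ + Gq U φ₀ (ψ - ψ₀)|
          ≤ |Fq U φ₀ ψ₀ + Gq U (φ - φ₀) ψ| + |Gq U φ₀ (ψ - ψ₀)| := abs_add_le _ _
        _ ≤ |Fq U φ₀ ψ₀| + |Gq U (φ - φ₀) ψ| + |Gq U φ₀ (ψ - ψ₀)| := by
            have := abs_add_le (Fq U φ₀ ψ₀) (Gq U (φ - φ₀) ψ)
            linarith
    linarith
  have h1 : A ≤ B + 2 * δ * (A + 1 / (d : ℝ)) := by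
    have hne : SA.Nonempty := ⟨|Fq U φstd φstd|, ⟨φstd, φstd, hφstd, hφstd, rfl⟩⟩
    have := csSup_le hne hmain
    rwa [← hA] at this
  refine ⟨h1, fun hhalf => ?_⟩
  have hpos : 0 < 1 - 2 * δ := by linarith
  have h2 : A * (1 - 2 * δ) ≤ B + 2 * δ / (d : ℝ) := by
    have he : 2 * δ * (A + 1 / (d : ℝ)) = 2 * δ * A + 2 * δ / (d : ℝ) := by ring
    nlinarith
  have h3 : A ≤ (B + 2 * δ / (d : ℝ)) / (1 - 2 * δ) := (le_div_iff₀ hpos).mpr h2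
  refine h3.trans_eq ?_
  rw [div_eq_mul_inv, one_div, mul_comm]
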